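/- Let B be a torsion-free abelian group such that every nonzero homomorphism from B to ℤ is injective. If f : B ⊕ ℤ → ℤ is a surjective homomorphism, then ker f is isomorphic to B. -/

import Mathlib

/-- The torsion-free predicate as defined in the older Mathlib (removed since). -/
def AddMonoid.IsTorsionFree (G : Type*) [AddMonoid G] : Prop :=
  ∀ g : G, g ≠ 0 → ¬IsOfFinAddOrder g

theorem stmt16 (B : Type*) [AddCommGroup B] (htf : AddMonoid.IsTorsionFree B)
    (hB : ∀ φ : B →+ ℤ, φ ≠ 0 → Function.Injective φ)
    (f : B × ℤ →+ ℤ) (hf : Function.Surjective f) :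
    Nonempty (f.ker ≃+ B) := by
  set φ : B →+ ℤ := f.comp (AddMonoidHom.inl B ℤ) with hφdef
  set n : ℤ := f (0, 1) with hndef
  have key : ∀ x : B × ℤ, f x = φ x.1 + x.2 * n := by
    intro x
    have hx : x = ((x.1, (0:ℤ)) + x.2 • ((0:B), (1:ℤ))) := by
      ext <;> simp
    rw [hx, map_add, map_zsmul]
    simp [hφdef, hndef, zsmul_eq_mul]
  obtain ⟨⟨c, j⟩, hcj⟩ := hf 1
  rw [key] at hcj
  by_cases hφ0 : φ = 0
  · -- φ = 0 : n is a unit, ker f = B × {0}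
    have hjn : j * n = 1 := by simpa [hφ0] using hcj
    have hmem : ∀ b : B, (AddMonoidHom.inl B ℤ) b ∈ f.ker := by
      intro b
      simp [AddMonoidHom.mem_ker, key, hφ0]
    refine ⟨(AddEquiv.ofBijective ((AddMonoidHom.inl B ℤ).codRestrict f.ker hmem) ?_).symm⟩
    constructor
    · intro a b hab
      have := congrArg (fun x : f.ker => (x : B × ℤ).1) hab
      simpa using this
    · rintro ⟨⟨b, k⟩, hbk⟩
      rw [AddMonoidHom.mem_ker, key] at hbk
      simp only [hφ0, AddMonoidHom.zero_apply, zero_add] at hbk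
      have hk : k = 0 := by
        have h : k * n * j = 0 := by rw [hbk, zero_mul]
        have h2 : k * (n * j) = k := by rw [mul_comm n j, hjn, mul_one]
        rw [← mul_assoc] at h2
        rw [h] at h2
        exact h2.symm
      exact ⟨b, by ext <;> simp [hk]⟩
  · -- φ ≠ 0 : φ injective
    have hinj := hB φ hφ0
    have hmem : ∀ b : B, ((n • AddMonoidHom.id B).prod (-φ)) b ∈ f.ker := by
      intro b
      simp only [AddMonoidHom.mem_ker, key, AddMonoidHom.prod_apply,
        AddMonoidHom.smul_apply, AddMonoidHom.id_apply, AddMonoidHom.neg_apply]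
      rw [map_zsmul, zsmul_eq_mul]
      push_cast
      ring
    refine ⟨(AddEquiv.ofBijective (((n • AddMonoidHom.id B).prod (-φ)).codRestrict f.ker hmem) ?_).symm⟩
    constructor
    · intro a b hab
      have h2 := congrArg (fun x : f.ker => (x : B × ℤ).2) hab
      simp only [AddMonoidHom.codRestrict_apply, AddMonoidHom.prod_apply,
        AddMonoidHom.neg_apply, neg_inj] at h2
      exact hinj h2
    · rintro ⟨⟨b, k⟩, hbk⟩
      rw [AddMonoidHom.mem_ker, key] at hbk
      -- hbk : φ b + k * n = 0
      refine ⟨j • b - k • c, ?_⟩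
      have hφb' : φ (j • b - k • c) = -k := by
        rw [map_sub, map_zsmul, map_zsmul, zsmul_eq_mul, zsmul_eq_mul]
        have h1 : φ b = -(k * n) := by linarith [hbk]
        have h2 : φ c = 1 - j * n := by linarith [hcj]
        rw [h1, h2]; push_cast; ring
      have hnb' : n • (j • b - k • c) = b := by
        apply hinj
        rw [map_zsmul, hφb', zsmul_eq_mul]
        have : φ b = -(k * n) := by linarith [hbk]
        rw [this]; push_cast; ring
      ext
      · simpa using hnb'
      · simp [hφb']
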